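/- Let AF = ⟨AR, attacks⟩ be a finite argumentation framework, and associate to each argument a a fresh atom d(a). Define α(AF) = ⋀_{a ∈ AR} ( (⋀_{b:(b,a)∈attacks} (d(a) ← ¬d(b))) ∧ (⋀_{b:(b,a)∈attacks} (d(a) ← ⋀_{c:(c,b)∈attacks} d(c))) ). Then for S ⊆ AR: S is a preferred extension of AF if and only if compl(S) = { d(a) | a ∈ AR \ S } is a minimal model of α(AF). -/

import Mathlib

inductive PForm (α : Type) where
  | atom : α → PForm α
  | tru : PForm α
  | fls : PForm α
  | neg : PForm α → PForm α
  | conj : PForm α → PForm α → PForm α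
  | disj : PForm α → PForm α → PForm α
  | impl : PForm α → PForm α → PForm α
deriving DecidableEq

def PForm.eval {α : Type} (M : Set α) : PForm α → Prop
  | .atom a => a ∈ M
  | .tru => True
  | .fls => False
  | .neg φ => ¬ PForm.eval M φ
  | .conj φ ψ => PForm.eval M φ ∧ PForm.eval M ψ
  | .disj φ ψ => PForm.eval M φ ∨ PForm.eval M ψ
  | .impl φ ψ => PForm.eval M φ → PForm.eval M ψ

def PForm.subst {α β : Type} (σ : α → PForm β) : PForm α → PForm β
  | .atom a => σ a
  | .tru => .tru
  | .fls => .fls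
  | .neg φ => .neg (PForm.subst σ φ)
  | .conj φ ψ => .conj (PForm.subst σ φ) (PForm.subst σ ψ)
  | .disj φ ψ => .disj (PForm.subst σ φ) (PForm.subst σ ψ)
  | .impl φ ψ => .impl (PForm.subst σ φ) (PForm.subst σ ψ)

def ModelOf {α : Type} (M : Set α) (T : Set (PForm α)) : Prop := ∀ φ ∈ T, PForm.eval M φ

def MinimalModel {α : Type} (M : Set α) (T : Set (PForm α)) : Prop :=
  ModelOf M T ∧ ∀ M', ModelOf M' T → M' ⊆ M → M' = M

def MaximalModel {α : Type} (M : Set α) (T : Set (PForm α)) : Prop :=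
  ModelOf M T ∧ ∀ M', ModelOf M' T → M ⊆ M' → M' = M

noncomputable def bigConj {ι α : Type} (s : Finset ι) (f : ι → PForm α) : PForm α :=
  (s.toList.map f).foldr PForm.conj PForm.tru

noncomputable def bigDisj {ι α : Type} (s : Finset ι) (f : ι → PForm α) : PForm α :=
  (s.toList.map f).foldr PForm.disj PForm.fls

def attackers {α : Type} [DecidableEq α] (att : Finset (α × α)) (a : α) : Finset α :=
  (att.filter (fun p => p.2 = a)).image Prod.fst

def conflictFree {α : Type} (att : Finset (α × α)) (S : Set α) : Prop :=
  ∀ a ∈ S, ∀ b ∈ S, (a, b) ∉ att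

def acceptable {α : Type} (att : Finset (α × α)) (S : Set α) (a : α) : Prop :=
  ∀ b, (b, a) ∈ att → ∃ c ∈ S, (c, b) ∈ att

def admissible {α : Type} (att : Finset (α × α)) (S : Set α) : Prop :=
  conflictFree att S ∧ ∀ a ∈ S, acceptable att S a

def preferredExt {α : Type} (att : Finset (α × α)) (S : Set α) : Prop :=
  admissible att S ∧ ∀ S', admissible att S' → S ⊆ S' → S' = S

noncomputable def alphaTheory {α : Type} [DecidableEq α] (att : Finset (α × α)) : Set (PForm α) :=
  { φ | ∃ p ∈ att, φ = PForm.impl (PForm.neg (PForm.atom p.1)) (PForm.atom p.2) } ∪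
  { φ | ∃ p ∈ att, φ = PForm.impl (bigConj (attackers att p.1) PForm.atom) (PForm.atom p.2) }

noncomputable def betaTheory {α : Type} [DecidableEq α] (att : Finset (α × α)) : Set (PForm α) :=
  { φ | ∃ p ∈ att, φ = PForm.impl (PForm.atom p.2) (PForm.neg (PForm.atom p.1)) } ∪
  { φ | ∃ p ∈ att, φ = PForm.impl (PForm.atom p.2) (bigDisj (attackers att p.1) PForm.atom) }


lemma mem_attackers {α : Type} [DecidableEq α] {att : Finset (α × α)} {c b : α} :
    c ∈ attackers att b ↔ (c, b) ∈ att := by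
  constructor
  · intro h
    simp only [attackers, Finset.mem_image, Finset.mem_filter] at h
    obtain ⟨p, ⟨hp, h2⟩, h1⟩ := h
    rw [← h1, ← h2]; exact hp
  · intro h
    simp only [attackers, Finset.mem_image, Finset.mem_filter]
    exact ⟨(c, b), ⟨h, rfl⟩, rfl⟩

lemma eval_foldr_conj {α : Type} (M : Set α) (l : List (PForm α)) :
    PForm.eval M (l.foldr PForm.conj PForm.tru) ↔ ∀ φ ∈ l, PForm.eval M φ := by
  induction l with
  | nil => simp [PForm.eval]
  | cons h t ih => simp [PForm.eval, ih]

lemma eval_bigConj {ι α : Type} (M : Set α) (s : Finset ι) (f : ι → PForm α) :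
    PForm.eval M (bigConj s f) ↔ ∀ i ∈ s, PForm.eval M (f i) := by
  rw [bigConj, eval_foldr_conj]
  constructor
  · intro h i hi
    exact h (f i) (List.mem_map_of_mem (f := f) (Finset.mem_toList.mpr hi))
  · intro h φ hφ
    obtain ⟨i, hi, rfl⟩ := List.mem_map.mp hφ
    exact h i (Finset.mem_toList.mp hi)

lemma model_iff_admissible {α : Type} [DecidableEq α] (att : Finset (α × α)) (M : Set α) :
    ModelOf M (alphaTheory att) ↔ admissible att Mᶜ := by
  constructor
  · intro hM
    constructor
    · intro a ha b hb hab
      have h1 := hM (PForm.impl (PForm.neg (PForm.atom a)) (PForm.atom b))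
        (Or.inl ⟨(a, b), hab, rfl⟩)
      exact hb (h1 ha)
    · intro a ha b hba
      have h2 := hM (PForm.impl (bigConj (attackers att b) PForm.atom) (PForm.atom a))
        (Or.inr ⟨(b, a), hba, rfl⟩)
      simp only [PForm.eval, eval_bigConj] at h2
      by_contra hc
      push_neg at hc
      apply ha
      apply h2
      intro c hcb
      by_contra hcM
      exact (hc c hcM) (mem_attackers.mp hcb)
  · intro ⟨hcf, hacc⟩ φ hφ
    rcases hφ with ⟨p, hp, rfl⟩ | ⟨p, hp, rfl⟩
    · intro h1
      by_contra h2
      exact hcf p.1 h1 p.2 h2 hp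
    · simp only [PForm.eval, eval_bigConj]
      intro hall
      by_contra ha
      obtain ⟨c, hcM, hcatt⟩ := hacc p.2 ha p.1 hp
      exact hcM (hall c (mem_attackers.mpr hcatt))

theorem stmt3 {α : Type} [DecidableEq α] [Fintype α] (att : Finset (α × α)) (S : Set α) :
    preferredExt att S ↔ MinimalModel Sᶜ (alphaTheory att)  := by
  constructor
  · intro ⟨hadm, hmax⟩
    constructor
    · rw [model_iff_admissible, compl_compl]; exact hadm
    · intro M' hM' hsub
      have hadm' : admissible att M'ᶜ := (model_iff_admissible att M').mp hM'
      have : M'ᶜ = S := hmax M'ᶜ hadm' (by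
        intro x hx
        simp only [Set.mem_compl_iff]
        intro hxM'
        exact (hsub hxM') hx)
      calc M' = M'ᶜᶜ := (compl_compl M').symm
        _ = Sᶜ := by rw [this]
  · intro ⟨hmod, hmin⟩
    constructor
    · have := (model_iff_admissible att Sᶜ).mp hmod
      rwa [compl_compl] at this
    · intro S' hadm' hsub
      have hmod' : ModelOf S'ᶜ (alphaTheory att) := by
        rw [model_iff_admissible, compl_compl]; exact hadm'
      have : S'ᶜ = Sᶜ := hmin S'ᶜ hmod' (Set.compl_subset_compl.mpr hsub)
      have := congrArg compl this
      rwa [compl_compl, compl_compl] at this
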